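/- arXiv:1603.07490 — 3 statements merged into one kernel-verified Lean document; each statement's English description precedes it below -/
import Mathlib

section
/- Let X be a reflexive Banach space and Θ: X → (-∞, ∞] a proper, lower semi-continuous, p-convex function with constant c₀ > 0 (p ≥ 2). Suppose the conjugate Θ* is Fréchet differentiable with gradient ∇Θ*: X* → X satisfying |Θ*(η) - Θ*(ξ) - ⟨η - ξ, ∇Θ*(ξ)⟩| ≤ (1/(p*(2c₀)^{p*-1})) ‖ξ - η‖^{p*}, where 1/p + 1/p* = 1. If ξ ∈ ∂_ε Θ(x) for some ε ≥ 0, then for any η ∈ X* we have ⟨η, x - ∇Θ*(ξ)⟩ ≤ ε + (1/(p*(2c₀)^{p*-1})) ‖η‖^{p*}. -/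
/-- Lemma 2.3, inequality (eq37): if ξ ∈ ∂_ε Θ(x) then
⟨η, x - ∇Θ*(ξ)⟩ ≤ ε + ‖η‖^{p*}/(p*(2c₀)^{p*-1}) for every η ∈ X*. -/
theorem stmt2
    {X : Type*} [NormedAddCommGroup X] [NormedSpace ℝ X] [CompleteSpace X]
    -- reflexivity of X
    (hrefl : Function.Surjective (NormedSpace.inclusionInDoubleDual ℝ X))
    (Θ : X → EReal) (p pstar c₀ ε : ℝ)
    (hp : 2 ≤ p) (hpq : 1 / p + 1 / pstar = 1) (hc₀ : 0 < c₀) (hε : 0 ≤ ε)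
    (hproper : ∃ z, Θ z ≠ ⊤) (hbot : ∀ z, Θ z ≠ ⊥)
    (hlsc : LowerSemicontinuous Θ)
    (hpconv : ∀ t : ℝ, t ∈ Set.Icc (0:ℝ) 1 → ∀ xb x : X,
      Θ (t • xb + (1 - t) • x) + ((c₀ * t * (1 - t) * ‖xb - x‖ ^ p : ℝ) : EReal)
        ≤ (t : EReal) * Θ xb + ((1 - t : ℝ) : EReal) * Θ x)
    -- the conjugate Θ* is everywhere finite, with value Θstar
    (Θstar : (X →L[ℝ] ℝ) → ℝ)
    (hconj : ∀ ζ : X →L[ℝ] ℝ, ((Θstar ζ : ℝ) : EReal) = ⨆ z : X, ((ζ z : ℝ) : EReal) - Θ z)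
    -- Θ* is Fréchet differentiable with gradient grad : X* → X
    (grad : (X →L[ℝ] ℝ) → X)
    (hdiff : ∀ ζ : X →L[ℝ] ℝ,
      HasFDerivAt Θstar (NormedSpace.inclusionInDoubleDual ℝ X (grad ζ)) ζ)
    (hgrad : ∀ ζ η : X →L[ℝ] ℝ,
      |Θstar η - Θstar ζ - (η - ζ) (grad ζ)|
        ≤ (1 / (pstar * (2 * c₀) ^ (pstar - 1))) * ‖ζ - η‖ ^ pstar)
    (x : X) (ξ : X →L[ℝ] ℝ)
    (hξ : ∀ z : X, Θ x + ((ξ (z - x) - ε : ℝ) : EReal) ≤ Θ z) :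
    ∀ η : X →L[ℝ] ℝ,
      η (x - grad ξ) ≤ ε + (1 / (pstar * (2 * c₀) ^ (pstar - 1))) * ‖η‖ ^ pstar := by
  intro η
  set C : ℝ := 1 / (pstar * (2 * c₀) ^ (pstar - 1)) with hC
  -- Θ x is finite
  obtain ⟨z₀, hz₀⟩ := hproper
  have hxtop : Θ x ≠ ⊤ := by
    intro h
    have := hξ z₀
    rw [h] at this
    rw [EReal.top_add_of_ne_bot (by exact_mod_cast EReal.coe_ne_bot _)] at this
    exact hz₀ (top_le_iff.mp this)
  have ha : ((Θ x).toReal : EReal) = Θ x := EReal.coe_toReal hxtop (hbot x)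
  set a : ℝ := (Θ x).toReal with haa
  -- Step A : Θstar ξ ≤ ξ x - a + ε
  have hA : Θstar ξ ≤ ξ x - a + ε := by
    have hsup : (⨆ z : X, ((ξ z : ℝ) : EReal) - Θ z) ≤ ((ξ x - a + ε : ℝ) : EReal) := by
      apply iSup_le
      intro z
      have h1 : ((a + (ξ (z - x) - ε) : ℝ) : EReal) ≤ Θ z := by
        rw [EReal.coe_add, ha]; exact hξ z
      have h2 : ((ξ z : ℝ) : EReal) - Θ z ≤
          ((ξ z : ℝ) : EReal) - ((a + (ξ (z - x) - ε) : ℝ) : EReal) :=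
        EReal.sub_le_sub le_rfl h1
      refine h2.trans ?_
      rw [← EReal.coe_sub, EReal.coe_le_coe_iff]
      have : ξ (z - x) = ξ z - ξ x := by rw [map_sub]
      linarith
    rw [← EReal.coe_le_coe_iff, hconj ξ]
    exact hsup
  -- Step B : (ξ+η) x - a ≤ Θstar (ξ+η)
  have hB : (ξ + η) x - a ≤ Θstar (ξ + η) := by
    have h1 : (((ξ + η) x - a : ℝ) : EReal) ≤ ⨆ z : X, (((ξ + η) z : ℝ) : EReal) - Θ z := by
      have := le_iSup (fun z : X => (((ξ + η) z : ℝ) : EReal) - Θ z) x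
      rw [EReal.coe_sub, ha]
      exact this
    rw [← hconj (ξ + η)] at h1
    exact_mod_cast h1
  -- Step C : the Hölder estimate
  have hCineq := hgrad ξ (ξ + η)
  rw [add_sub_cancel_left] at hCineq
  have hnorm : ‖ξ - (ξ + η)‖ = ‖η‖ := by
    rw [show ξ - (ξ + η) = -η by abel, norm_neg]
  rw [hnorm] at hCineq
  have habs := (abs_le.mp hCineq).2
  -- combine
  have hx : (ξ + η) x = ξ x + η x := rfl
  have hgx : η (x - grad ξ) = η x - η (grad ξ) := by rw [map_sub]
  rw [hgx]
  rw [hx] at hB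
  linarith
end

section
/- For any real numbers a, b ≥ 0, t > 1 and β > 1, we have (a + b)^t ≤ β a^t + β (β^{1/(t-1)} - 1)^{1-t} b^t. -/
lemma two_pt_rpow (w₁ w₂ z₁ z₂ : ℝ) (hw₁ : 0 ≤ w₁) (hw₂ : 0 ≤ w₂) (hw : w₁ + w₂ = 1)
    (hz₁ : 0 ≤ z₁) (hz₂ : 0 ≤ z₂) {p : ℝ} (hp : 1 ≤ p) :
    (w₁ * z₁ + w₂ * z₂) ^ p ≤ w₁ * z₁ ^ p + w₂ * z₂ ^ p := by
  have h := Real.rpow_arith_mean_le_arith_mean_rpow Finset.univ ![w₁, w₂] ![z₁, z₂]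
    (by intro i _; fin_cases i <;> assumption)
    (by simp [Fin.sum_univ_succ, hw])
    (by intro i _; fin_cases i <;> assumption) hp
  simpa [Fin.sum_univ_succ] using h

/-- (a + b)^t ≤ β a^t + β (β^{1/(t-1)} - 1)^{1-t} b^t for a, b ≥ 0, t > 1, β > 1. -/
theorem stmt4 (a b t β : ℝ) (ha : 0 ≤ a) (hb : 0 ≤ b) (ht : 1 < t) (hβ : 1 < β) :
    (a + b) ^ t ≤ β * a ^ t + β * (β ^ (1 / (t - 1)) - 1) ^ (1 - t) * b ^ t := by
  have ht' : 0 < t - 1 := by linarith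
  set c := β ^ (1 / (t - 1)) with hcdef
  have hc1 : 1 < c := Real.one_lt_rpow_iff_of_pos (by linarith) |>.2 (Or.inl ⟨hβ, by positivity⟩)
  have hc0 : 0 < c := by linarith
  have hcb : c ^ (t - 1) = β := by
    rw [hcdef, ← Real.rpow_mul (by linarith : (0:ℝ) ≤ β), one_div,
      inv_mul_cancel₀ ht'.ne', Real.rpow_one]
  set ε := c - 1 with hεdef
  have hε : 0 < ε := by simp [hεdef]; linarith
  have key := two_pt_rpow (1/c) (ε/c) (c*a) ((c/ε)*b)
    (by positivity) (by positivity) (by field_simp [hεdef]; linarith) (by positivity) (by positivity)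
    (le_of_lt ht)
  have e1 : 1/c * (c*a) + (ε/c) * ((c/ε)*b) = a + b := by field_simp
  rw [e1] at key
  refine key.trans_eq ?_
  rw [Real.mul_rpow hc0.le ha, Real.mul_rpow (by positivity) hb,
    Real.div_rpow hc0.le hε.le]
  have hct : c ^ t = c ^ (t-1) * c := by
    rw [← Real.rpow_add_one hc0.ne' (t-1)]; ring_nf
  have hεt : ε ^ (1-t) = (ε ^ (t-1))⁻¹ := by
    rw [← Real.rpow_neg hε.le]; ring_nf
  have hεt2 : ε ^ t = ε ^ (t-1) * ε := by
    rw [← Real.rpow_add_one hε.ne' (t-1)]; ring_nf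
  rw [hct, hcb, hεt, hεt2]
  have hεt0 : (0:ℝ) < ε ^ (t-1) := Real.rpow_pos_of_pos hε _
  field_simp
end

section
/- Let p ≥ 2, s > 1, β > 1, σ > 0, ε ≥ 0 and r ≥ 0 be real numbers. Define μ = μ̃ (r^p + σε)^{1 - s/p} for some μ̃ ≥ 0. If p ≥ s, then μ r^s ≥ μ (r^p + σε)^{s/p} - μ̃ σε. If p < s, then μ r^s ≥ (1/β) μ (r^p + σε)^{s/p} - (β^{p/(s-p)} - 1)^{(p-s)/p} μ̃ σε. -/
open Real Set

lemma aux_convex (a b l t : ℝ) (ha : 0 ≤ a) (hb : 0 ≤ b) (hl : 0 < l) (hl1 : l < 1)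
    (ht : 1 ≤ t) :
    (a + b) ^ t ≤ l ^ (1 - t) * a ^ t + (1 - l) ^ (1 - t) * b ^ t := by
  have h1 : (0:ℝ) < 1 - l := by linarith
  have hc := (convexOn_rpow ht).2 (mem_Ici.2 (div_nonneg ha hl.le))
    (mem_Ici.2 (div_nonneg hb h1.le)) hl.le h1.le (by ring)
  simp only [smul_eq_mul] at hc
  have e0 : l * (a / l) + (1 - l) * (b / (1 - l)) = a + b := by
    field_simp
  rw [e0] at hc
  have e1 : l * (a / l) ^ t = l ^ (1 - t) * a ^ t := by
    rw [Real.div_rpow ha hl.le, Real.rpow_sub hl, Real.rpow_one]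
    field_simp
  have e2 : (1 - l) * (b / (1 - l)) ^ t = (1 - l) ^ (1 - t) * b ^ t := by
    rw [Real.div_rpow hb h1.le, Real.rpow_sub h1, Real.rpow_one]
    field_simp
  rw [e1, e2] at hc
  exact hc

lemma aux_key (a b t β : ℝ) (ha : 0 ≤ a) (hb : 0 ≤ b) (ht : 1 < t) (hβ : 1 < β) :
    (a + b) ^ t ≤ β * a ^ t + β * (β ^ (1/(t-1)) - 1) ^ (1 - t) * b ^ t := by
  set γ : ℝ := β ^ (1/(t-1)) with hγ
  have hβ0 : (0:ℝ) < β := by linarith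
  have ht1 : (0:ℝ) < t - 1 := by linarith
  have hγ1 : 1 < γ := (Real.one_lt_rpow_iff_of_pos hβ0).2 (Or.inl ⟨hβ, by positivity⟩)
  have hγ0 : (0:ℝ) < γ := by linarith
  have hγpow : γ ^ (t - 1) = β := by
    rw [hγ, ← Real.rpow_mul hβ0.le]
    rw [one_div_mul_cancel (by linarith : t - 1 ≠ 0), Real.rpow_one]
  have hl : (0:ℝ) < γ⁻¹ := by positivity
  have hl1 : γ⁻¹ < 1 := inv_lt_one_of_one_lt₀ hγ1
  have hc := aux_convex a b γ⁻¹ t ha hb hl hl1 ht.le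
  have e1 : (γ⁻¹) ^ (1 - t) = β := by
    rw [Real.inv_rpow hγ0.le, ← Real.rpow_neg hγ0.le, neg_sub, hγpow]
  have e2 : (1 - γ⁻¹) ^ (1 - t) = (γ - 1) ^ (1 - t) * β := by
    have : 1 - γ⁻¹ = (γ - 1) * γ⁻¹ := by field_simp
    rw [this, Real.mul_rpow (by linarith) hl.le, e1]
  rw [e1, e2] at hc
  calc (a + b) ^ t ≤ β * a ^ t + (γ - 1) ^ (1 - t) * β * b ^ t := hc
    _ = β * a ^ t + β * (γ - 1) ^ (1 - t) * b ^ t := by ring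

/-- The step-size inequality (eq:16.1.15) of the paper, in both cases p ≥ s and p < s. -/
theorem stmt10 (p s β σ ε r μt μ : ℝ)
    (hp : 2 ≤ p) (hs : 1 < s) (hβ : 1 < β) (hσ : 0 < σ) (hε : 0 ≤ ε)
    (hr : 0 ≤ r) (hμt : 0 ≤ μt)
    (hμ : μ = μt * (r ^ p + σ * ε) ^ (1 - s / p)) :
    (s ≤ p → μ * (r ^ p + σ * ε) ^ (s / p) - μt * σ * ε ≤ μ * r ^ s) ∧
    (p < s → (1 / β) * μ * (r ^ p + σ * ε) ^ (s / p)
        - (β ^ (p / (s - p)) - 1) ^ ((p - s) / p) * μt * σ * ε ≤ μ * r ^ s) := by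
  have hp0 : (0:ℝ) < p := by linarith
  have hs0 : s ≠ 0 := by linarith
  have hsp0 : s / p ≠ 0 := by positivity
  have hrp : 0 ≤ r ^ p := Real.rpow_nonneg hr p
  have hσε : 0 ≤ σ * ε := by positivity
  have hA0 : 0 ≤ r ^ p + σ * ε := by linarith
  constructor
  · intro hsp
    rcases eq_or_lt_of_le hA0 with hA1 | hA1
    · -- degenerate case A = 0
      have hrp0 : r ^ p = 0 := by linarith
      have hε0 : ε = 0 := by
        rcases mul_eq_zero.1 (by linarith : σ * ε = 0) with h | h
        · exact absurd h (ne_of_gt hσ)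
        · exact h
      have hr0 : r = 0 := by
        by_contra hne
        have : (0:ℝ) < r := lt_of_le_of_ne hr (Ne.symm hne)
        exact absurd hrp0 (ne_of_gt (Real.rpow_pos_of_pos this p))
      rw [hμ, hr0, hε0]
      simp [Real.zero_rpow hsp0, Real.zero_rpow hs0, Real.zero_rpow (ne_of_gt hp0)]
    · -- main case A > 0
      rw [hμ]
      have key : μt * (r ^ p + σ * ε) ^ (1 - s / p) * (r ^ p + σ * ε) ^ (s / p)
          = μt * (r ^ p + σ * ε) := by
        rw [mul_assoc, ← Real.rpow_add hA1]
        norm_num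
      rw [key]
      have h : r ^ p ≤ (r ^ p + σ * ε) ^ (1 - s / p) * r ^ s := by
        rcases eq_or_lt_of_le hr with hr0 | hr0
        · rw [← hr0]
          simp [Real.zero_rpow (ne_of_gt hp0), Real.zero_rpow hs0]
        · have h3 : r ^ p = r ^ (p - s) * r ^ s := by
            rw [← Real.rpow_add hr0, sub_add_cancel]
          have h4 : r ^ (p - s) = (r ^ p) ^ (1 - s / p) := by
            rw [← Real.rpow_mul hr]
            congr 1
            field_simp
          have h5 : (r ^ p) ^ (1 - s / p) ≤ (r ^ p + σ * ε) ^ (1 - s / p) := by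
            apply Real.rpow_le_rpow hrp (by linarith)
            have : s / p ≤ 1 := (div_le_one hp0).2 hsp
            linarith
          calc r ^ p = (r ^ p) ^ (1 - s / p) * r ^ s := by rw [← h4]; exact h3
            _ ≤ (r ^ p + σ * ε) ^ (1 - s / p) * r ^ s :=
                mul_le_mul_of_nonneg_right h5 (Real.rpow_nonneg hr s)
      calc μt * (r ^ p + σ * ε) - μt * σ * ε = μt * (r ^ p) := by ring
        _ ≤ μt * ((r ^ p + σ * ε) ^ (1 - s / p) * r ^ s) := mul_le_mul_of_nonneg_left h hμt
        _ = μt * (r ^ p + σ * ε) ^ (1 - s / p) * r ^ s := by ring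
  · intro hps
    have ht : 1 < s / p := (one_lt_div hp0).2 hps
    have hK : 0 ≤ (β ^ (p / (s - p)) - 1) ^ ((p - s) / p) := by
      apply Real.rpow_nonneg
      have : (1:ℝ) ≤ β ^ (p / (s - p)) :=
        Real.one_le_rpow hβ.le (div_nonneg hp0.le (by linarith))
      linarith
    rcases eq_or_lt_of_le hA0 with hA1 | hA1
    · have hrp0 : r ^ p = 0 := by linarith
      have hε0 : ε = 0 := by
        rcases mul_eq_zero.1 (by linarith : σ * ε = 0) with h | h
        · exact absurd h (ne_of_gt hσ)
        · exact h
      have hr0 : r = 0 := by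
        by_contra hne
        have : (0:ℝ) < r := lt_of_le_of_ne hr (Ne.symm hne)
        exact absurd hrp0 (ne_of_gt (Real.rpow_pos_of_pos this p))
      rw [hμ, hr0, hε0]
      simp [Real.zero_rpow hsp0, Real.zero_rpow hs0, Real.zero_rpow (ne_of_gt hp0)]
    · set K := (β ^ (p / (s - p)) - 1) ^ ((p - s) / p) with hKdef
      set X := (r ^ p + σ * ε) ^ (1 - s / p) with hXdef
      rw [hμ]
      have hkey := aux_key (r ^ p) (σ * ε) (s / p) β hrp hσε ht hβ
      have hexp1 : 1 / (s / p - 1) = p / (s - p) := by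
        rw [div_sub' (ne_of_gt hp0), one_div_div, mul_one]
      have hexp2 : 1 - s / p = (p - s) / p := by
        field_simp
      rw [hexp1, hexp2, ← hKdef] at hkey
      have hprs : (r ^ p) ^ (s / p) = r ^ s := by
        rw [← Real.rpow_mul hr]
        congr 1
        field_simp
      rw [hprs] at hkey
      -- bound the (σ ε)^(s/p) term
      have h6 : (σ * ε) ^ (s / p) ≤ σ * ε * (r ^ p + σ * ε) ^ (s / p - 1) := by
        rcases eq_or_lt_of_le hσε with h0 | h0
        · rw [← h0, Real.zero_rpow hsp0, zero_mul]
        · have e : (σ * ε) ^ (s / p) = σ * ε * (σ * ε) ^ (s / p - 1) := by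
            nth_rewrite 2 [← Real.rpow_one (σ * ε)]
            rw [← Real.rpow_add h0, add_sub_cancel]
          rw [e]
          exact mul_le_mul_of_nonneg_left
            (Real.rpow_le_rpow hσε (by linarith) (by linarith)) hσε
      have hβ0 : (0:ℝ) < β := by linarith
      have hkey2 : (r ^ p + σ * ε) ^ (s / p)
          ≤ β * r ^ s + β * K * (σ * ε * (r ^ p + σ * ε) ^ (s / p - 1)) := by
        have := mul_le_mul_of_nonneg_left h6 (by positivity : (0:ℝ) ≤ β * K)
        linarith
      have hc : (0:ℝ) ≤ 1 / β * X := by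
        have : 0 ≤ X := Real.rpow_nonneg hA0 _
        positivity
      have hmul := mul_le_mul_of_nonneg_left hkey2 hc
      have eXX : X * (r ^ p + σ * ε) ^ (s / p - 1) = 1 := by
        rw [hXdef, ← Real.rpow_add hA1]
        norm_num
      have hinner : 1 / β * (X * (r ^ p + σ * ε) ^ (s / p)) ≤ X * r ^ s + K * (σ * ε) := by
        calc 1 / β * (X * (r ^ p + σ * ε) ^ (s / p))
            = 1 / β * X * (r ^ p + σ * ε) ^ (s / p) := by ring
          _ ≤ 1 / β * X * (β * r ^ s + β * K * (σ * ε * (r ^ p + σ * ε) ^ (s / p - 1))) := hmul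
          _ = X * r ^ s + K * (σ * ε) * (X * (r ^ p + σ * ε) ^ (s / p - 1)) := by
              field_simp
          _ = X * r ^ s + K * (σ * ε) := by rw [eXX]; ring
      calc 1 / β * (μt * X) * (r ^ p + σ * ε) ^ (s / p) - K * μt * σ * ε
          = μt * (1 / β * (X * (r ^ p + σ * ε) ^ (s / p))) - μt * (K * (σ * ε)) := by ring
        _ ≤ μt * (X * r ^ s + K * (σ * ε)) - μt * (K * (σ * ε)) := by
            have := mul_le_mul_of_nonneg_left hinner hμt
            linarith
        _ = μt * X * r ^ s := by ring
end
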